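/- arXiv:2007.12169 — 5 statements merged into one kernel-verified Lean document; each statement's English description precedes it below -/
import Mathlib

section
/- Let N ≥ 1 and let e_1,…,e_N be nonnegative integers with e_1 ≥ 1 and e_N ≥ 1. Suppose Q : {0,1,2,…} → ℝ is strictly decreasing with Q_n > 0 for all n, Q_0 = 1, and Q_n = Σ_{k=1}^N e_k Q_{n+k} for all n ≥ 0. Then Q_n = ω^n for all n ≥ 0, where ω is the unique positive real zero of the polynomial e_N x^N + e_{N−1} x^{N−1} + ⋯ + e_1 x − 1. -/
open Finset


/-- Daykin's theorem (as used for the weak converse on the unit interval): a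
strictly decreasing positive solution of the recurrence
`Q n = Σ_{k=1}^N e k * Q (n+k)` with `Q 0 = 1` must be `Q n = ω^n`, where `ω`
is the unique positive real zero of `e_N x^N + ... + e_1 x - 1`. -/
theorem decreasing_recurrence_solution_is_geometric (N : ℕ) (hN : 1 ≤ N)
    (e : ℕ → ℕ) (he1 : 1 ≤ e 1) (heN : 1 ≤ e N)
    (Q : ℕ → ℝ) (hpos : ∀ n, 0 < Q n) (hanti : StrictAnti Q) (hQ0 : Q 0 = 1)
    (hrec : ∀ n : ℕ, Q n = ∑ k ∈ Finset.Icc 1 N, (e k : ℝ) * Q (n + k)) :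
    ∃ ω : ℝ, 0 < ω ∧
      (∑ k ∈ Finset.Icc 1 N, (e k : ℝ) * ω ^ k) = 1 ∧
      (∀ x : ℝ, 0 < x → (∑ k ∈ Finset.Icc 1 N, (e k : ℝ) * x ^ k) = 1 → x = ω) ∧
      ∀ n, Q n = ω ^ n := by
  set F : ℝ → ℝ := fun x => ∑ k ∈ Finset.Icc 1 N, (e k : ℝ) * x ^ k with hFdef
  have h1mem : (1 : ℕ) ∈ Finset.Icc 1 N := by simp [Finset.mem_Icc, hN]
  have hmono : StrictMonoOn F (Set.Ici 0) := by
    intro x hx y hy hxy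
    apply Finset.sum_lt_sum
    · intro k hk
      have h0 : (0:ℝ) ≤ (e k : ℝ) := Nat.cast_nonneg _
      have h2 := pow_le_pow_left₀ hx hxy.le k
      nlinarith
    · refine ⟨1, h1mem, ?_⟩
      have h1 : (1:ℝ) ≤ (e 1 : ℝ) := by exact_mod_cast he1
      simp only [pow_one]
      have hx0 : (0:ℝ) ≤ x := hx
      nlinarith
  have hF0 : F 0 = 0 := by
    apply Finset.sum_eq_zero
    intro k hk
    have : k ≠ 0 := by simp [Finset.mem_Icc] at hk; omega
    simp [zero_pow this]
  have hF1 : 1 ≤ F 1 := by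
    have h1 : (1:ℝ) ≤ (e 1 : ℝ) := by exact_mod_cast he1
    calc (1:ℝ) ≤ (e 1 : ℝ) * 1 ^ 1 := by simpa using h1
    _ ≤ F 1 := Finset.single_le_sum (f := fun k => (e k : ℝ) * (1:ℝ) ^ k)
        (fun k _ => by positivity) h1mem
  have hcont : ContinuousOn F (Set.Icc 0 1) := by
    apply Continuous.continuousOn
    exact continuous_finset_sum _ (fun k _ => continuous_const.mul (continuous_pow k))
  have hIVT := intermediate_value_Icc (by norm_num : (0:ℝ) ≤ 1) hcont
  have h1mem' : (1:ℝ) ∈ Set.Icc (F 0) (F 1) := by rw [hF0]; exact ⟨by norm_num, hF1⟩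
  obtain ⟨ω, hω01, hωF⟩ := hIVT h1mem'
  have hωpos : 0 < ω := by
    rcases lt_or_eq_of_le hω01.1 with h | h
    · exact h
    · exfalso; rw [← h] at hωF; rw [hF0] at hωF; norm_num at hωF
  have hω1 : ω ≤ 1 := hω01.2
  have huniq : ∀ x : ℝ, 0 < x → F x = 1 → x = ω := by
    intro x hx hFx
    exact hmono.injOn (Set.mem_Ici.2 hx.le) (Set.mem_Ici.2 hωpos.le) (by rw [hFx, hωF])
  -- the difference sequence and weighted coefficients
  set d : ℕ → ℝ := fun m => Q (m+1) - ω * Q m with hddef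
  set a : ℕ → ℝ := fun i => ∑ k ∈ Finset.Icc (i+1) N, (e k : ℝ) * ω ^ (k - 1 - i) with hadef
  -- telescoping identity
  have htel : ∀ n k : ℕ, ∑ i ∈ Finset.range k, ω ^ (k - 1 - i) * d (n + i)
      = Q (n + k) - ω ^ k * Q n := by
    intro n k
    induction k with
    | zero => simp
    | succ k ih =>
      rw [Finset.sum_range_succ]
      have hcg : ∑ i ∈ Finset.range k, ω ^ (k + 1 - 1 - i) * d (n + i)
          = ∑ i ∈ Finset.range k, ω * (ω ^ (k - 1 - i) * d (n + i)) := by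
        apply Finset.sum_congr rfl
        intro i hi
        have hik : i < k := Finset.mem_range.1 hi
        have hexp : k + 1 - 1 - i = (k - 1 - i) + 1 := by omega
        rw [hexp, pow_succ]; ring
      rw [hcg, ← Finset.mul_sum, ih]
      have h1 : k + 1 - 1 - k = 0 := by omega
      have h2 : n + (k+1) = (n + k) + 1 := by omega
      simp only [hddef, h1, h2, pow_zero, one_mul, pow_succ]
      ring
  -- key identity, step 1
  have hkey0 : ∀ n : ℕ, ∑ k ∈ Finset.Icc 1 N, (e k : ℝ) * (Q (n+k) - ω ^ k * Q n) = 0 := by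
    intro n
    have : ∑ k ∈ Finset.Icc 1 N, (e k : ℝ) * (Q (n+k) - ω ^ k * Q n)
        = (∑ k ∈ Finset.Icc 1 N, (e k : ℝ) * Q (n+k))
          - (∑ k ∈ Finset.Icc 1 N, (e k : ℝ) * ω ^ k) * Q n := by
      rw [Finset.sum_mul, ← Finset.sum_sub_distrib]
      apply Finset.sum_congr rfl
      intro k _; ring
    have hωF' : (∑ k ∈ Finset.Icc 1 N, (e k : ℝ) * ω ^ k) = 1 := hωF
    rw [this, hωF', ← hrec n]
    ring
  -- key identity
  have hkey : ∀ n : ℕ, ∑ i ∈ Finset.range N, a i * d (n + i) = 0 := by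
    intro n
    have step1 : ∀ i : ℕ, Finset.Icc (i+1) N = (Finset.Icc 1 N).filter (fun k => i < k) := by
      intro i; ext k; simp [Finset.mem_Icc, Finset.mem_filter]; omega
    have step2 : ∀ k : ℕ, k ≤ N → (Finset.range N).filter (fun i => i < k) = Finset.range k := by
      intro k hk; ext i; simp [Finset.mem_range, Finset.mem_filter]; omega
    calc ∑ i ∈ Finset.range N, a i * d (n + i)
        = ∑ i ∈ Finset.range N, ∑ k ∈ Finset.Icc 1 N,
            (if i < k then (e k : ℝ) * ω ^ (k - 1 - i) * d (n + i) else 0) := by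
          apply Finset.sum_congr rfl
          intro i _
          rw [hadef]
          simp only
          rw [Finset.sum_mul, step1 i, Finset.sum_filter]
      _ = ∑ k ∈ Finset.Icc 1 N, ∑ i ∈ Finset.range N,
            (if i < k then (e k : ℝ) * ω ^ (k - 1 - i) * d (n + i) else 0) :=
          Finset.sum_comm
      _ = ∑ k ∈ Finset.Icc 1 N, (e k : ℝ) * (Q (n+k) - ω ^ k * Q n) := by
          apply Finset.sum_congr rfl
          intro k hk
          have hkN : k ≤ N := (Finset.mem_Icc.1 hk).2
          rw [← Finset.sum_filter, step2 k hkN, ← htel n k, Finset.mul_sum]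
          apply Finset.sum_congr rfl
          intro i _; ring
      _ = 0 := hkey0 n
  -- the linear functional V
  set V : ℕ → ℝ := fun n => ∑ i ∈ Finset.range N, a i * Q (n + i) with hVdef
  have hVrec : ∀ n, V (n+1) = ω * V n := by
    intro n
    have h0 : ∑ i ∈ Finset.range N, (a i * Q (n+i+1) - ω * (a i * Q (n+i))) = 0 := by
      rw [← hkey n]
      apply Finset.sum_congr rfl
      intro i _
      simp only [hddef]; ring
    rw [Finset.sum_sub_distrib] at h0
    have h1 : V (n+1) = ∑ i ∈ Finset.range N, a i * Q (n+i+1) := by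
      rw [hVdef]
      apply Finset.sum_congr rfl
      intro i _
      congr 2
      omega
    rw [h1]
    show _ = ω * ∑ i ∈ Finset.range N, a i * Q (n + i)
    rw [Finset.mul_sum]
    linarith [h0]
  have hV : ∀ n, V n = ω ^ n * V 0 := by
    intro n
    induction n with
    | zero => simp
    | succ n ih => rw [hVrec n, ih, pow_succ]; ring
  -- positivity of coefficients
  have hapos : ∀ i, i < N → 0 < a i := by
    intro i hi
    rw [hadef]
    apply Finset.sum_pos'
    · intro k _; positivity
    · refine ⟨N, by simp [Finset.mem_Icc]; omega, ?_⟩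
      have h1 : (1:ℝ) ≤ (e N : ℝ) := by exact_mod_cast heN
      have h2 : (0:ℝ) < ω ^ (N - 1 - i) := pow_pos hωpos _
      nlinarith
  set A : ℝ := ∑ i ∈ Finset.range N, a i with hAdef
  have hA : 0 < A := by
    rw [hAdef]
    apply Finset.sum_pos (fun i hi => hapos i (Finset.mem_range.1 hi))
    exact ⟨0, Finset.mem_range.2 (by omega)⟩
  have hV0 : 0 < V 0 := by
    apply Finset.sum_pos (fun i hi => mul_pos (hapos i (Finset.mem_range.1 hi)) (hpos _))
    exact ⟨0, Finset.mem_range.2 (by omega)⟩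
  have hVleA : ∀ n, V n ≤ A * Q n := by
    intro n
    rw [hAdef, Finset.sum_mul]
    apply Finset.sum_le_sum
    intro i hi
    exact mul_le_mul_of_nonneg_left (hanti.antitone (Nat.le_add_right n i))
      (hapos i (Finset.mem_range.1 hi)).le
  have hAleV : ∀ n, A * Q (n + (N-1)) ≤ V n := by
    intro n
    rw [hAdef, Finset.sum_mul]
    apply Finset.sum_le_sum
    intro i hi
    have hiN : i < N := Finset.mem_range.1 hi
    exact mul_le_mul_of_nonneg_left (hanti.antitone (by omega : n + i ≤ n + (N-1)))
      (hapos i hiN).le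
  have hlow : ∀ n, V 0 / A * ω ^ n ≤ Q n := by
    intro n
    rw [div_mul_eq_mul_div, div_le_iff₀ hA]
    have h1 := hVleA n
    have h2 := hV n
    nlinarith
  have hup : ∀ n, Q (n + (N-1)) ≤ V 0 / A * ω ^ n := by
    intro n
    rw [div_mul_eq_mul_div, le_div_iff₀ hA]
    have h1 := hAleV n
    have h2 := hV n
    nlinarith
  -- the normalized sequence
  set c : ℕ → ℝ := fun m => Q m / ω ^ m with hcdef
  have hc1 : c 0 = 1 := by simp [hcdef, hQ0]
  have hcl : ∀ m, V 0 / A ≤ c m := by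
    intro m
    rw [hcdef]
    simp only
    rw [le_div_iff₀ (pow_pos hωpos m)]
    exact hlow m
  set β : ℝ := max (V 0 / A / ω ^ (N-1)) (1 / ω ^ (N-1)) with hβdef
  have hcb : ∀ m, c m ≤ β := by
    intro m
    rcases le_or_gt (N-1) m with h | h
    · set n := m - (N-1) with hndef
      have hm : m = n + (N-1) := by omega
      have h2 : ω ^ m = ω ^ n * ω ^ (N-1) := by rw [hm, pow_add]
      have h3 := hup n
      rw [← hm] at h3
      refine le_max_of_le_left ?_
      rw [hcdef]
      simp only
      rw [div_le_iff₀ (pow_pos hωpos m)]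
      have h4 : V 0 / A / ω ^ (N-1) * ω ^ m = V 0 / A * ω ^ n := by
        rw [h2]
        field_simp
      rw [h4]
      exact h3
    · have hQm1 : Q m ≤ 1 := by
        rcases Nat.eq_zero_or_pos m with h0 | h0
        · rw [h0, hQ0]
        · rw [← hQ0]; exact (hanti h0).le
      have h4 : ω ^ (N-1) ≤ ω ^ m := pow_le_pow_of_le_one hωpos.le hω1 (by omega)
      refine le_max_of_le_right ?_
      exact div_le_div₀ (by norm_num) hQm1 (pow_pos hωpos _) h4
  -- probability weights
  set w : ℕ → ℝ := fun k => (e k : ℝ) * ω ^ k with hwdef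
  have hwsum : ∑ k ∈ Finset.Icc 1 N, w k = 1 := hωF
  have hwnonneg : ∀ k, 0 ≤ w k := fun k => by rw [hwdef]; positivity
  have hw1 : 0 < w 1 := by
    rw [hwdef]
    simp only
    have h1 : (1:ℝ) ≤ (e 1:ℝ) := by exact_mod_cast he1
    nlinarith [pow_pos hωpos 1]
  have hw1le : w 1 ≤ 1 := by
    rw [← hwsum]
    exact Finset.single_le_sum (fun k _ => hwnonneg k) h1mem
  have hcrec : ∀ n, c n = ∑ k ∈ Finset.Icc 1 N, w k * c (n + k) := by
    intro n
    have hterm : ∀ k ∈ Finset.Icc 1 N, w k * c (n+k) = (e k : ℝ) * Q (n+k) / ω ^ n := by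
      intro k _
      rw [hwdef, hcdef]
      simp only
      rw [pow_add]
      have h1 : ω ^ n ≠ 0 := (pow_pos hωpos n).ne'
      have h2 : ω ^ k ≠ 0 := (pow_pos hωpos k).ne'
      field_simp
    rw [Finset.sum_congr rfl hterm, ← Finset.sum_div, ← hrec n, hcdef]
  set b : ℕ → ℝ := fun j => a j * ω ^ j with hbdef
  have hbpos : ∀ j, j < N → 0 < b j := fun j hj => mul_pos (hapos j hj) (pow_pos hωpos j)
  set B : ℝ := ∑ j ∈ Finset.range N, b j with hBdef
  have hB : 0 < B :=
    Finset.sum_pos (fun j hj => hbpos j (Finset.mem_range.1 hj))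
      ⟨0, Finset.mem_range.2 (by omega)⟩
  have hcV : ∀ n, ∑ j ∈ Finset.range N, b j * c (n + j) = V 0 := by
    intro n
    have hterm : ∀ j ∈ Finset.range N, b j * c (n+j) = a j * Q (n+j) / ω ^ n := by
      intro j _
      rw [hbdef, hcdef]
      simp only
      rw [pow_add]
      have h1 : ω ^ n ≠ 0 := (pow_pos hωpos n).ne'
      have h2 : ω ^ j ≠ 0 := (pow_pos hωpos j).ne'
      field_simp
    rw [Finset.sum_congr rfl hterm, ← Finset.sum_div]
    have h3 : (∑ j ∈ Finset.range N, a j * Q (n + j)) = ω ^ n * V 0 := hV n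
    rw [h3, mul_comm, mul_div_assoc, div_self (pow_pos hωpos n).ne', mul_one]
  -- supremum and infimum of c
  have hSne : (Set.range c).Nonempty := ⟨c 0, 0, rfl⟩
  have hbdd : BddAbove (Set.range c) := ⟨β, by rintro x ⟨m, rfl⟩; exact hcb m⟩
  have hbddb : BddBelow (Set.range c) := ⟨V 0 / A, by rintro x ⟨m, rfl⟩; exact hcl m⟩
  set s : ℝ := sSup (Set.range c) with hsdef
  set iv : ℝ := sInf (Set.range c) with hivdef
  have hles : ∀ m, c m ≤ s := fun m => le_csSup hbdd ⟨m, rfl⟩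
  have hige : ∀ m, iv ≤ c m := fun m => csInf_le hbddb ⟨m, rfl⟩
  -- one-step propagation of near-supremum values
  have hstep : ∀ (δ : ℝ) (m : ℕ), 0 < δ → s - δ < c m → s - δ / w 1 < c (m+1) := by
    intro δ m hδ hm
    have hsplit : w 1 * c (m+1) + ∑ k ∈ (Finset.Icc 1 N).erase 1, w k * c (m+k)
        = ∑ k ∈ Finset.Icc 1 N, w k * c (m+k) := by
      simpa using Finset.add_sum_erase (Finset.Icc 1 N) (fun k => w k * c (m+k)) h1mem
    have hwsplit : w 1 + ∑ k ∈ (Finset.Icc 1 N).erase 1, w k = 1 := by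
      rw [Finset.add_sum_erase _ w h1mem]
      exact hwsum
    have hrest : ∑ k ∈ (Finset.Icc 1 N).erase 1, w k * c (m+k) ≤ (1 - w 1) * s := by
      have h1 : ∑ k ∈ (Finset.Icc 1 N).erase 1, w k * c (m+k)
          ≤ ∑ k ∈ (Finset.Icc 1 N).erase 1, w k * s :=
        Finset.sum_le_sum (fun k _ => mul_le_mul_of_nonneg_left (hles _) (hwnonneg k))
      rw [← Finset.sum_mul] at h1
      have h2 : ∑ k ∈ (Finset.Icc 1 N).erase 1, w k = 1 - w 1 := by linarith only [hwsplit]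
      rw [h2] at h1
      exact h1
    have hc2 : c m ≤ w 1 * c (m+1) + (1 - w 1) * s := by
      have h0 := hcrec m
      rw [← hsplit] at h0
      linarith only [h0, hrest]
    have h3 : w 1 * (s - c (m+1)) < δ := by linarith only [hc2, hm]
    have h4 : s - c (m+1) < δ / w 1 := by
      rw [lt_div_iff₀ hw1]
      linarith only [h3]
    linarith only [h4]
  -- long windows where c is near its supremum
  have hwindow : ∀ ε : ℝ, 0 < ε → ∃ n, ∀ j, j ≤ N - 1 → s - ε < c (n + j) := by
    intro ε hε
    set δ : ℝ := ε * w 1 ^ (N-1) with hδdef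
    have hδ : 0 < δ := mul_pos hε (pow_pos hw1 _)
    obtain ⟨x, ⟨n₀, rfl⟩, hx⟩ := exists_lt_of_lt_csSup hSne (by linarith only [hδ] : s - δ < s)
    refine ⟨n₀, ?_⟩
    have hind : ∀ j, s - δ / w 1 ^ j < c (n₀ + j) := by
      intro j
      induction j with
      | zero => simpa using hx
      | succ j ih =>
        have h5 := hstep (δ / w 1 ^ j) (n₀ + j) (by positivity) ih
        have heq : δ / w 1 ^ j / w 1 = δ / w 1 ^ (j+1) := by rw [div_div, ← pow_succ]
        rw [heq] at h5
        exact h5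
    intro j hj
    have h5 : w 1 ^ (N-1) ≤ w 1 ^ j := pow_le_pow_of_le_one hw1.le hw1le hj
    have h6 : δ / w 1 ^ j ≤ δ / w 1 ^ (N-1) :=
      div_le_div_of_nonneg_left hδ.le (pow_pos hw1 _) h5
    have h7 : δ / w 1 ^ (N-1) = ε := by
      rw [hδdef]
      field_simp
    linarith only [hind j, h6, h7]
  -- V 0 = B * s
  have hBs : V 0 = B * s := by
    have hle : V 0 ≤ B * s := by
      rw [← hcV 0, hBdef, Finset.sum_mul]
      exact Finset.sum_le_sum (fun j hj =>
        mul_le_mul_of_nonneg_left (hles _) (hbpos j (Finset.mem_range.1 hj)).le)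
    have hge : B * s ≤ V 0 := by
      by_contra hcon
      push_neg at hcon
      set ε : ℝ := (B * s - V 0) / (2 * B) with hεdef
      have hε : 0 < ε := div_pos (by linarith only [hcon]) (by linarith only [hB])
      obtain ⟨n, hn⟩ := hwindow ε hε
      have h8 : ∑ j ∈ Finset.range N, b j * (s - ε) ≤ ∑ j ∈ Finset.range N, b j * c (n + j) := by
        apply Finset.sum_le_sum
        intro j hj
        have hjN := Finset.mem_range.1 hj
        exact mul_le_mul_of_nonneg_left (hn j (by omega)).le (hbpos j hjN).le
      rw [hcV n, ← Finset.sum_mul, ← hBdef] at h8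
      have h9 : B * ε = (B * s - V 0) / 2 := by
        rw [hεdef]
        field_simp
      linarith only [h8, h9, hcon]
    linarith only [hle, hge]
  -- the supremum is at most the infimum
  have hsi : s ≤ iv := by
    apply le_of_forall_pos_le_add
    intro ε hε
    obtain ⟨x, ⟨m, rfl⟩, hxm⟩ := exists_lt_of_csInf_lt hSne (lt_add_of_pos_right iv hε)
    have h0mem : (0:ℕ) ∈ Finset.range N := Finset.mem_range.2 (by omega)
    have hsplit := Finset.add_sum_erase (Finset.range N) (fun j => b j * c (m+j)) h0mem
    have hbsplit := Finset.add_sum_erase (Finset.range N) b h0mem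
    rw [← hBdef] at hbsplit
    have hrest : ∑ j ∈ (Finset.range N).erase 0, b j * c (m+j) ≤ (B - b 0) * s := by
      have h1 : ∑ j ∈ (Finset.range N).erase 0, b j * c (m+j)
          ≤ ∑ j ∈ (Finset.range N).erase 0, b j * s :=
        Finset.sum_le_sum (fun j hj => mul_le_mul_of_nonneg_left (hles _)
          (hbpos j (Finset.mem_range.1 (Finset.mem_of_mem_erase hj))).le)
      rw [← Finset.sum_mul] at h1
      have h2 : ∑ j ∈ (Finset.range N).erase 0, b j = B - b 0 := by linarith only [hbsplit]
      rw [h2] at h1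
      exact h1
    have h3 : B * s = b 0 * c (m + 0) + ∑ j ∈ (Finset.range N).erase 0, b j * c (m+j) := by
      rw [← hBs, ← hcV m]
      simpa using hsplit.symm
    have hcm0 : c (m + 0) = c m := by norm_num
    have hb0 := hbpos 0 (by omega)
    have h4 : b 0 * c (m + 0) ≤ b 0 * (iv + ε) := by
      rw [hcm0]
      exact mul_le_mul_of_nonneg_left hxm.le hb0.le
    have h5 : b 0 * s ≤ b 0 * (iv + ε) := by linarith only [h3, h4, hrest]
    exact le_of_mul_le_mul_left h5 hb0
  -- conclude
  have hconst : ∀ m, c m = 1 := by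
    intro m
    have hms : c m = s := le_antisymm (hles m) (le_trans hsi (hige m))
    have h0s : c 0 = s := le_antisymm (hles 0) (le_trans hsi (hige 0))
    rw [hms, ← h0s, hc1]
  refine ⟨ω, hωpos, hωF, huniq, ?_⟩
  intro n
  have h := hconst n
  rw [hcdef] at h
  simp only at h
  have := (div_eq_one_iff_eq (pow_pos hωpos n).ne').1 h
  exact this
end

section
/- Let f(z) = a_n z^n + a_{n−1} z^{n−1} + ⋯ + a_1 z + a_0 be a polynomial with real coefficients such that a_k ≥ 0 for all 1 ≤ k ≤ n, and suppose there exist indices 1 ≤ m < ℓ ≤ n with gcd(m,ℓ) = 1, a_m ≠ 0 and a_ℓ ≠ 0. If ω is a positive real number with f(ω) = 0, then ω is the only complex zero of f of modulus ω; that is, every α ∈ ℂ with f(α) = 0 and |α| = ω satisfies α = ω. -/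
lemma re_eq_abs_pow_aux (z : ℂ) (h : z.re = ‖z‖) : z = (z.re : ℂ) := by
  have h1 : ‖z‖ ^ 2 = z.re * z.re + z.im * z.im := by
    rw [Complex.sq_norm]; rfl
  rw [← h] at h1
  have him : z.im = 0 := by nlinarith [sq_nonneg z.im]
  exact Complex.ext rfl (by simp [him])

/-- If `f(z) = Σ_{k=0}^n a_k z^k` has real coefficients with `a_k ≥ 0` for
`1 ≤ k ≤ n`, and there are coprime indices `1 ≤ m < ℓ ≤ n` with
`a_m ≠ 0 ≠ a_ℓ`, then a positive real zero `ω` of `f` is the only complex zero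
of `f` on the circle `|z| = ω`. -/
theorem positive_zero_unique_on_circle (n : ℕ) (a : ℕ → ℝ)
    (hnn : ∀ k, 1 ≤ k → k ≤ n → 0 ≤ a k)
    (m l : ℕ) (hm : 1 ≤ m) (hml : m < l) (hln : l ≤ n)
    (hgcd : Nat.gcd m l = 1) (ham : a m ≠ 0) (hal : a l ≠ 0)
    (ω : ℝ) (hω : 0 < ω)
    (hfω : ∑ k ∈ Finset.range (n + 1), a k * ω ^ k = 0)
    (α : ℂ) (hfα : ∑ k ∈ Finset.range (n + 1), (a k : ℂ) * α ^ k = 0)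
    (habs : ‖α‖ = ω) : α = (ω : ℂ) := by
  have hαne : α ≠ 0 := by
    intro h
    rw [h, norm_zero] at habs
    exact hω.ne' habs.symm
  have hωne : (ω : ℂ) ≠ 0 := by exact_mod_cast hω.ne'
  -- real part of hfα
  have hre : ∑ k ∈ Finset.range (n + 1), a k * (α ^ k).re = 0 := by
    have := congrArg Complex.re hfα
    simpa [Complex.re_sum, Complex.mul_re] using this
  -- each term of the difference sum is zero
  have hterm : ∀ k ∈ Finset.range (n + 1), a k * (ω ^ k - (α ^ k).re) = 0 := by
    have hsum : ∑ k ∈ Finset.range (n + 1), a k * (ω ^ k - (α ^ k).re) = 0 := by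
      have : ∑ k ∈ Finset.range (n + 1), a k * (ω ^ k - (α ^ k).re)
          = (∑ k ∈ Finset.range (n + 1), a k * ω ^ k)
            - ∑ k ∈ Finset.range (n + 1), a k * (α ^ k).re := by
        rw [← Finset.sum_sub_distrib]
        exact Finset.sum_congr rfl fun k _ => by ring
      rw [this, hfω, hre, sub_zero]
    have hnonneg : ∀ k ∈ Finset.range (n + 1), 0 ≤ a k * (ω ^ k - (α ^ k).re) := by
      intro k hk
      rcases Nat.eq_zero_or_pos k with rfl | hk1
      · simp
      · have hak : 0 ≤ a k := hnn k hk1 (Nat.lt_succ_iff.mp (Finset.mem_range.mp hk))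
        have hle : (α ^ k).re ≤ ω ^ k := by
          calc (α ^ k).re ≤ ‖α ^ k‖ := Complex.re_le_norm _
            _ = ω ^ k := by rw [norm_pow, habs]
        exact mul_nonneg hak (by linarith)
    exact fun k hk => ((Finset.sum_eq_zero_iff_of_nonneg hnonneg).mp hsum) k hk
  -- α^k = ω^k for k with a k ≠ 0
  have key : ∀ k, k ≤ n → a k ≠ 0 → α ^ k = (ω : ℂ) ^ k := by
    intro k hk hak
    have hk' : k ∈ Finset.range (n + 1) := Finset.mem_range.mpr (Nat.lt_succ_of_le hk)
    have h0 := hterm k hk'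
    have hre' : (α ^ k).re = ω ^ k := by
      rcases mul_eq_zero.mp h0 with h | h
      · exact absurd h hak
      · linarith
    have habsk : ‖α ^ k‖ = ω ^ k := by rw [norm_pow, habs]
    have := re_eq_abs_pow_aux (α ^ k) (by rw [hre', habsk])
    rw [hre'] at this
    rw [this]
    push_cast
    ring
  have hαm : α ^ m = (ω : ℂ) ^ m := key m (le_of_lt (lt_of_lt_of_le hml hln)) ham
  have hαl : α ^ l = (ω : ℂ) ^ l := key l hln hal
  -- Bezout
  have hbez : (1 : ℤ) = m * Nat.gcdA m l + l * Nat.gcdB m l := by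
    have := Nat.gcd_eq_gcd_ab m l
    rw [hgcd] at this
    exact_mod_cast this
  set A := Nat.gcdA m l
  set B := Nat.gcdB m l
  calc α = α ^ (1 : ℤ) := (zpow_one α).symm
    _ = (α ^ (m : ℤ)) ^ A * (α ^ (l : ℤ)) ^ B := by
        rw [hbez, zpow_add₀ hαne, zpow_mul, zpow_mul]
    _ = ((ω : ℂ) ^ (m : ℤ)) ^ A * ((ω : ℂ) ^ (l : ℤ)) ^ B := by
        rw [zpow_natCast, zpow_natCast, hαm, hαl, ← zpow_natCast (ω:ℂ) m,
          ← zpow_natCast (ω:ℂ) l]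
    _ = (ω : ℂ) ^ (1 : ℤ) := by
        rw [← zpow_mul, ← zpow_mul, ← zpow_add₀ hωne, ← hbez]
    _ = (ω : ℂ) := zpow_one _
end

section
/- Let f(z) = a_n z^n − a_{n−1} z^{n−1} − ⋯ − a_1 z − a_0 be a polynomial with real coefficients such that a_k ≥ 0 for all 0 ≤ k ≤ n and a_n a_0 ≠ 0. If there exist indices 1 ≤ m < ℓ ≤ n−1 with gcd(m,ℓ) = 1 and a_m a_ℓ ≠ 0, then f is a dominant polynomial: f has a complex root z_0 such that every complex root z of f with z ≠ z_0 satisfies |z| < |z_0|. -/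
private lemma re_eq_abs_imp {w : ℂ} (h : w.re = ‖w‖) :
    w = (‖w‖ : ℂ) := by
  have h2 : w.re ^ 2 + w.im ^ 2 = (‖w‖) ^ 2 := by
    rw [Complex.sq_norm, Complex.normSq_apply]; ring
  have him : w.im = 0 := by
    have : w.im ^ 2 = 0 := by rw [h] at h2; linarith
    exact pow_eq_zero_iff (by norm_num) |>.mp this
  apply Complex.ext <;> simp [h, him]

private lemma pow_eq_imp_eq {z w : ℂ} (hz : z ≠ 0) (hw : w ≠ 0) {m l : ℕ}
    (hg : Nat.gcd m l = 1) (h1 : z ^ m = w ^ m) (h2 : z ^ l = w ^ l) : z = w := by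
  have hb := Nat.gcd_eq_gcd_ab m l
  rw [hg] at hb
  push_cast at hb
  have e : ∀ v : ℂ, v ≠ 0 → v = (v ^ m) ^ Nat.gcdA m l * (v ^ l) ^ Nat.gcdB m l := by
    intro v hv
    rw [← zpow_natCast v m, ← zpow_natCast v l, ← zpow_mul, ← zpow_mul, ← zpow_add₀ hv,
      ← hb, zpow_one]
  rw [e z hz, e w hw, h1, h2]

private lemma key_mono (n : ℕ) (a : ℕ → ℝ) (hnn : ∀ k, k ≤ n → 0 ≤ a k)
    (ha0 : 0 < a 0) (hn : 1 ≤ n) {r1 r2 : ℝ} (h1 : 0 ≤ r1) (h12 : r1 < r2) :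
    r2 ^ n * (a n * r1 ^ n - ∑ k ∈ Finset.range n, a k * r1 ^ k) <
      r1 ^ n * (a n * r2 ^ n - ∑ k ∈ Finset.range n, a k * r2 ^ k) := by
  have h2 : (0:ℝ) ≤ r2 := h1.trans h12.le
  have key : ∑ k ∈ Finset.range n, r1 ^ n * (a k * r2 ^ k) <
      ∑ k ∈ Finset.range n, r2 ^ n * (a k * r1 ^ k) := by
    apply Finset.sum_lt_sum
    · intro k hk
      have hk' : k < n := Finset.mem_range.mp hk
      have hak : 0 ≤ a k := hnn k hk'.le
      obtain ⟨d, hd⟩ : ∃ d, n = k + d := ⟨n - k, by omega⟩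
      subst hd
      rw [pow_add, pow_add]
      nlinarith [mul_le_mul_of_nonneg_left (pow_le_pow_left₀ h1 h12.le d)
        (mul_nonneg hak (mul_nonneg (pow_nonneg h1 k) (pow_nonneg h2 k))),
        mul_nonneg hak (mul_nonneg (pow_nonneg h1 k) (pow_nonneg h2 k))]
    · refine ⟨0, Finset.mem_range.mpr (by omega), ?_⟩
      simp only [pow_zero, mul_one]
      have := pow_lt_pow_left₀ h12 h1 (by omega : n ≠ 0)
      nlinarith
  rw [mul_sub, mul_sub, Finset.mul_sum, Finset.mul_sum]
  have e : r2 ^ n * (a n * r1 ^ n) = r1 ^ n * (a n * r2 ^ n) := by ring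
  linarith [key, e]



/-- Dominant polynomials: if `f(z) = a_n z^n - a_{n-1} z^{n-1} - ... - a_0`
with `a_k ≥ 0`, `a_n a_0 ≠ 0`, and there are coprime indices
`1 ≤ m < ℓ ≤ n - 1` with `a_m a_ℓ ≠ 0`, then `f` has a unique complex root of
largest modulus. -/
theorem dominant_polynomial (n : ℕ) (a : ℕ → ℝ)
    (hnn : ∀ k, k ≤ n → 0 ≤ a k) (han : a n ≠ 0) (ha0 : a 0 ≠ 0)
    (m l : ℕ) (hm : 1 ≤ m) (hml : m < l) (hln : l + 1 ≤ n)
    (hgcd : Nat.gcd m l = 1) (ham : a m ≠ 0) (hal : a l ≠ 0) :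
    ∃ z₀ : ℂ,
      ((a n : ℂ) * z₀ ^ n - ∑ k ∈ Finset.range n, (a k : ℂ) * z₀ ^ k = 0) ∧
      ∀ z : ℂ, ((a n : ℂ) * z ^ n - ∑ k ∈ Finset.range n, (a k : ℂ) * z ^ k = 0) →
        z ≠ z₀ → ‖z‖ < ‖z₀‖ := by
  have hnn0 : 0 < n := by omega
  have hmn : m < n := by omega
  have hlnn : l < n := by omega
  have hA : 0 < a n := lt_of_le_of_ne (hnn n le_rfl) (Ne.symm han)
  have hA0 : 0 < a 0 := lt_of_le_of_ne (hnn 0 (by omega)) (Ne.symm ha0)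
  have hAm : 0 < a m := lt_of_le_of_ne (hnn m hmn.le) (Ne.symm ham)
  have hAl : 0 < a l := lt_of_le_of_ne (hnn l hlnn.le) (Ne.symm hal)
  set g : ℝ → ℝ := fun r => a n * r ^ n - ∑ k ∈ Finset.range n, a k * r ^ k with hgdef
  have hcont : Continuous g := by
    apply Continuous.sub (continuous_const.mul (continuous_pow n))
    exact continuous_finset_sum _ fun k _ => continuous_const.mul (continuous_pow k)
  have hg0 : g 0 = -(a 0) := by
    simp only [hgdef]
    rw [Finset.sum_eq_single_of_mem 0 (Finset.mem_range.mpr hnn0)]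
    · simp [zero_pow (by omega : n ≠ 0)]
    · intro b _ hb; simp [zero_pow hb]
  set A := ∑ k ∈ Finset.range n, a k with hAdef
  have hApos : 0 ≤ A := Finset.sum_nonneg fun k hk => hnn k (Finset.mem_range.mp hk).le
  set R : ℝ := (A + 1) / a n + 1 with hR
  have hR1 : 1 ≤ R := by
    have h0 : 0 ≤ (A + 1) / a n := div_nonneg (by linarith) hA.le
    rw [hR]; linarith
  have hRpos : 0 < R := by linarith
  have hgR : 0 < g R := by
    have h1 : ∑ k ∈ Finset.range n, a k * R ^ k ≤ A * R ^ (n - 1) := by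
      rw [hAdef, Finset.sum_mul]
      apply Finset.sum_le_sum
      intro k hk
      have hk' := Finset.mem_range.mp hk
      exact mul_le_mul_of_nonneg_left (pow_le_pow_right₀ hR1 (by omega)) (hnn k (by omega))
    have e : R * R ^ (n - 1) = R ^ n := by
      rw [← pow_succ']
      congr 1
      omega
    have h3 : A < a n * R := by
      rw [hR, mul_add, mul_one, mul_div_cancel₀ _ hA.ne']
      linarith
    have h2 : A * R ^ (n - 1) < a n * R ^ n := by
      calc A * R ^ (n - 1) < (a n * R) * R ^ (n - 1) :=
            mul_lt_mul_of_pos_right h3 (pow_pos hRpos _)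
        _ = a n * (R * R ^ (n - 1)) := by ring
        _ = a n * R ^ n := by rw [e]
    simp only [hgdef]
    linarith
  obtain ⟨r₀, hr₀mem, hr₀⟩ := intermediate_value_Icc (by linarith : (0:ℝ) ≤ R)
    hcont.continuousOn ⟨by linarith [hg0], hgR.le⟩
  have hr₀pos : 0 < r₀ := by
    rcases (lt_or_eq_of_le hr₀mem.1) with h | h
    · exact h
    · exfalso; rw [← h] at hr₀; rw [hg0] at hr₀; linarith
  -- expand the root equation for r₀
  have hroot : a n * r₀ ^ n = ∑ k ∈ Finset.range n, a k * r₀ ^ k := by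
    have : g r₀ = 0 := hr₀
    simp only [hgdef] at this
    linarith
  refine ⟨(r₀ : ℂ), ?_, ?_⟩
  · have : ((a n * r₀ ^ n - ∑ k ∈ Finset.range n, a k * r₀ ^ k : ℝ) : ℂ) = 0 := by
      rw [show a n * r₀ ^ n - ∑ k ∈ Finset.range n, a k * r₀ ^ k = 0 from by linarith [hroot]]
      norm_num
    push_cast at this
    convert this using 2
  · intro z hz hzne
    have habsz₀ : ‖(r₀ : ℂ)‖ = r₀ := by
      rw [Complex.norm_real, Real.norm_eq_abs, abs_of_pos hr₀pos]
    rw [habsz₀]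
    set r := ‖z‖ with hrdef
    have hrnonneg : 0 ≤ r := norm_nonneg z
    have hzeq : (a n : ℂ) * z ^ n = ∑ k ∈ Finset.range n, (a k : ℂ) * z ^ k := by
      linear_combination hz
    have habs_terms : ∀ k, k < n → ‖((a k : ℂ) * z ^ k)‖ = a k * r ^ k := by
      intro k hk
      rw [norm_mul, norm_pow, Complex.norm_real, Real.norm_eq_abs, abs_of_nonneg (hnn k hk.le)]
    have hsum_abs : ∑ k ∈ Finset.range n, ‖((a k : ℂ) * z ^ k)‖
        = ∑ k ∈ Finset.range n, a k * r ^ k :=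
      Finset.sum_congr rfl fun k hk => habs_terms k (Finset.mem_range.mp hk)
    have hSle : a n * r ^ n ≤ ∑ k ∈ Finset.range n, a k * r ^ k := by
      have h1 : ‖((a n : ℂ) * z ^ n)‖ = a n * r ^ n := by
        rw [norm_mul, norm_pow, Complex.norm_real, Real.norm_eq_abs, abs_of_pos hA]
      calc a n * r ^ n = ‖((a n : ℂ) * z ^ n)‖ := h1.symm
        _ = ‖(∑ k ∈ Finset.range n, (a k : ℂ) * z ^ k)‖ := by rw [hzeq]
        _ ≤ ∑ k ∈ Finset.range n, ‖((a k : ℂ) * z ^ k)‖ :=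
            norm_sum_le _ _
        _ = ∑ k ∈ Finset.range n, a k * r ^ k := hsum_abs
    have hrle : r ≤ r₀ := by
      by_contra hcon
      push_neg at hcon
      have := key_mono n a hnn hA0 (by omega) hr₀pos.le hcon
      rw [show a n * r₀ ^ n - ∑ k ∈ Finset.range n, a k * r₀ ^ k = 0 from by linarith] at this
      nlinarith [pow_pos hr₀pos n, pow_pos (hr₀pos.trans hcon) n]
    rcases lt_or_eq_of_le hrle with h | h
    · exact h
    -- equality case: show z = r₀, contradiction
    exfalso
    apply hzne
    -- equality case : |z| = r₀ forces z = r₀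
    have hz0 : z ≠ 0 := by
      intro hz0
      rw [hz0] at hrdef
      simp at hrdef
      linarith [hr₀pos]
    set S : ℂ := ∑ k ∈ Finset.range n, (a k : ℂ) * z ^ k with hSdef
    have h1 : ‖((a n : ℂ) * z ^ n)‖ = a n * r ^ n := by
      rw [norm_mul, norm_pow, Complex.norm_real, Real.norm_eq_abs, abs_of_pos hA]
    have habsS : ‖S‖ = ∑ k ∈ Finset.range n, ‖((a k : ℂ) * z ^ k)‖ := by
      rw [← hzeq, h1, hsum_abs, h, hroot]
    have hSpos : 0 < ‖S‖ := by
      rw [← hzeq, h1, h]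
      positivity
    have hSne : S ≠ 0 := by
      intro hc; rw [hc] at hSpos; simp at hSpos
    set c : ℂ := (starRingEnd ℂ) S / (‖S‖ : ℂ) with hc
    have habsSne : (‖S‖ : ℂ) ≠ 0 := by
      exact_mod_cast hSpos.ne'
    have hcS : c * S = (‖S‖ : ℂ) := by
      rw [hc, div_mul_eq_mul_div, mul_comm, Complex.mul_conj, Complex.normSq_eq_norm_sq]
      rw [sq, Complex.ofReal_mul, mul_div_assoc, div_self habsSne, mul_one]
    have habsc : ‖c‖ = 1 := by
      rw [hc, norm_div, Complex.norm_conj, Complex.norm_real, Real.norm_eq_abs, abs_of_pos hSpos,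
        div_self hSpos.ne']
    have hle : ∀ k ∈ Finset.range n,
        (c * ((a k : ℂ) * z ^ k)).re ≤ ‖((a k : ℂ) * z ^ k)‖ := by
      intro k _
      calc (c * ((a k : ℂ) * z ^ k)).re ≤ ‖(c * ((a k : ℂ) * z ^ k))‖ :=
            Complex.re_le_norm _
        _ = ‖((a k : ℂ) * z ^ k)‖ := by rw [norm_mul, habsc, one_mul]
    have hsumre : ∑ k ∈ Finset.range n, (c * ((a k : ℂ) * z ^ k)).re
        = ∑ k ∈ Finset.range n, ‖((a k : ℂ) * z ^ k)‖ := by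
      rw [← habsS, ← Complex.re_sum, ← Finset.mul_sum, ← hSdef, hcS, Complex.ofReal_re]
    have heach := (Finset.sum_eq_sum_iff_of_le hle).mp hsumre
    have hterm : ∀ k, k < n → c * ((a k : ℂ) * z ^ k)
        = ((a k * r ^ k : ℝ) : ℂ) := by
      intro k hk
      have h2 := heach k (Finset.mem_range.mpr hk)
      have h3 : ‖(c * ((a k : ℂ) * z ^ k))‖
          = ‖((a k : ℂ) * z ^ k)‖ := by rw [norm_mul, habsc, one_mul]
      have h4 := re_eq_abs_imp (w := c * ((a k : ℂ) * z ^ k)) (by rw [h3, h2])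
      rw [h4, h3, habs_terms k hk]
    have hc1 : c = 1 := by
      have h0 := hterm 0 hnn0
      simp only [pow_zero, mul_one] at h0
      have : c * (a 0 : ℂ) = 1 * (a 0 : ℂ) := by
        rw [h0, one_mul]
      exact mul_right_cancel₀ (by exact_mod_cast ha0) this
    have hpow : ∀ k, k < n → a k ≠ 0 → z ^ k = ((r₀ : ℂ)) ^ k := by
      intro k hk hak
      have h5 := hterm k hk
      rw [hc1, one_mul] at h5
      rw [h] at h5
      push_cast at h5
      exact mul_left_cancel₀ (by exact_mod_cast hak : (a k : ℂ) ≠ 0) h5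
    have hr₀ne : ((r₀ : ℂ)) ≠ 0 := by
      exact_mod_cast hr₀pos.ne'
    exact pow_eq_imp_eq hz0 hr₀ne hgcd (hpow m hmn ham) (hpow l hlnn hal)
end

section
/- Let p be a prime, let 𝓔_0 be a Zeckendorf collection for positive integers, and let 𝓔 be the completion of 𝓔_0. Assume ε_n ≤ min(√p, (p−1)/2) for all n ≥ 1 and all ε ∈ 𝓔. If Q and Z are sequences in ℤ_p with |Q_k|_p > |Q_{k+1}|_p and |Z_k|_p > |Z_{k+1}|_p for all k ≥ 1, and the two subsets X_Q and X_Z of ℤ_p are equal, then Q_k = Z_k for all k ≥ 1. In other words, every decreasing 𝓔-subset of ℤ_p has a unique decreasing fundamental sequence. -/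
/-- The `i`-th basis coefficient function `β^i`. -/
def beta (i : ℕ) : ℕ → ℕ := fun k => if k = i then 1 else 0

/-- A coefficient function has finite support. -/
def FinSupp (ε : ℕ → ℕ) : Prop := (Function.support ε).Finite

/-- The ascending lexicographical order `μ <_a ν` on finite-support coefficient
functions: there is a (necessarily largest) index `k` with `μ k < ν k` and
`μ j = ν j` for all `j > k`. -/
def AscLt (μ ν : ℕ → ℕ) : Prop := ∃ k, μ k < ν k ∧ ∀ j, k < j → μ j = ν j

/-- An ascendingly-ordered collection of coefficient functions: a set of
finite-support coefficient functions on the indices `{1,2,...}` (so vanishing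
at the dummy index `0`) containing the zero function and every `β^i`. -/
def IsCollection (E : Set (ℕ → ℕ)) : Prop :=
  (∀ ε ∈ E, ε 0 = 0 ∧ FinSupp ε) ∧ (0 : ℕ → ℕ) ∈ E ∧ ∀ i, 1 ≤ i → beta i ∈ E

/-- `ν` is the immediate successor of `μ` in `E`. -/
def IsImmSucc (E : Set (ℕ → ℕ)) (μ ν : ℕ → ℕ) : Prop :=
  ν ∈ E ∧ AscLt μ ν ∧ ∀ σ ∈ E, AscLt μ σ → σ = ν ∨ AscLt ν σ

/-- `ν` is the immediate predecessor of `μ` in `E`. -/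
def IsImmPred (E : Set (ℕ → ℕ)) (μ ν : ℕ → ℕ) : Prop :=
  ν ∈ E ∧ AscLt ν μ ∧ ∀ σ ∈ E, AscLt σ μ → σ = ν ∨ AscLt σ ν

/-- A Zeckendorf collection for positive integers. -/
def IsZeckendorf (E : Set (ℕ → ℕ)) : Prop :=
  IsCollection E ∧
  (∀ μ ∈ E, {σ | σ ∈ E ∧ AscLt σ μ}.Finite) ∧
  ∀ μ ∈ E, ∃ ν, IsImmSucc E μ ν ∧
    ((ν = fun k => beta 1 k + μ k) ∨
      ∃ n, 2 ≤ n ∧ ∃ δ, IsImmPred E (beta n) δ ∧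
        (∀ j, 1 ≤ j → j < n → μ j = δ j) ∧
        (ν = fun k => beta n k + if n ≤ k then μ k else 0))

/-- The order of a finite-support coefficient function: the largest index with
a nonzero value (`0` for the zero function). -/
noncomputable def ordA (μ : ℕ → ℕ) : ℕ := sSup {n | μ n ≠ 0}

/-- The completion of a Zeckendorf collection `E₀` for positive integers: all
coefficient functions `ε` which agree with some member of `E₀` up to `M k`,
for a strictly increasing sequence of indices `M k` bounding the orders. -/
def Completion (E0 : Set (ℕ → ℕ)) : Set (ℕ → ℕ) :=
  {ε | ∃ (μ : ℕ → ℕ → ℕ) (M : ℕ → ℕ), StrictMono M ∧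
    ∀ k, μ k ∈ E0 ∧ ordA (μ k) ≤ M k ∧ ∀ j, j ≤ M k → ε j = μ k j}

/-- The `𝓔`-subset of `ℤ_p` generated by a sequence `Q`: the sums
`Σ_{k≥1} ε_k Q_k` over the nonzero coefficient functions `ε ∈ E`. -/
noncomputable def padicSubset (p : ℕ) [Fact p.Prime] (E : Set (ℕ → ℕ))
    (Q : ℕ → ℤ_[p]) : Set ℤ_[p] :=
  {x | ∃ ε ∈ E, (∃ k, 1 ≤ k ∧ ε k ≠ 0) ∧
    x = ∑' k : ℕ, (ε (k + 1) : ℤ_[p]) * Q (k + 1)}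


open scoped BigOperators

section Helpers

variable {p : ℕ} [hp : Fact p.Prime]

/-- Tail sum `Σ_{k>n} ε_k Q_k`. -/
noncomputable def zTail (ε : ℕ → ℕ) (Q : ℕ → ℤ_[p]) (n : ℕ) : ℤ_[p] :=
  ∑' k : ℕ, (ε (k + n + 1) : ℤ_[p]) * Q (k + n + 1)

variable {Q : ℕ → ℤ_[p]}

lemma zQ_ne (hQ : ∀ k, 1 ≤ k → ‖Q (k + 1)‖ < ‖Q k‖) {k : ℕ} (hk : 1 ≤ k) : Q k ≠ 0 := by
  intro h
  have h1 := hQ k hk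
  have h2 : (0:ℝ) ≤ ‖Q (k+1)‖ := norm_nonneg _
  rw [h] at h1; simp at h1; linarith

lemma zQ_anti (hQ : ∀ k, 1 ≤ k → ‖Q (k + 1)‖ < ‖Q k‖) :
    ∀ a b, 1 ≤ a → a ≤ b → ‖Q b‖ ≤ ‖Q a‖ := by
  intro a b ha hab
  induction b with
  | zero => omega
  | succ b ih =>
    rcases Nat.lt_or_ge a (b+1) with h | h
    · have hb : 1 ≤ b := by omega
      exact le_trans (le_of_lt (hQ b hb)) (ih (by omega))
    · have : a = b + 1 := by omega
      rw [this]

lemma zQ_strict (hQ : ∀ k, 1 ≤ k → ‖Q (k + 1)‖ < ‖Q k‖) :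
    ∀ a b, 1 ≤ a → a < b → ‖Q b‖ < ‖Q a‖ := by
  intro a b ha hab
  have h1 : ‖Q (a+1)‖ < ‖Q a‖ := hQ a ha
  have h2 : ‖Q b‖ ≤ ‖Q (a+1)‖ := zQ_anti hQ (a+1) b (by omega) (by omega)
  linarith

lemma zQ_inj (hQ : ∀ k, 1 ≤ k → ‖Q (k + 1)‖ < ‖Q k‖) {a b : ℕ} (ha : 1 ≤ a) (hb : 1 ≤ b)
    (h : ‖Q a‖ = ‖Q b‖) : a = b := by
  rcases Nat.lt_trichotomy a b with h1 | h1 | h1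
  · exact absurd h (ne_of_gt (zQ_strict hQ a b ha h1))
  · exact h1
  · exact absurd h (ne_of_lt (zQ_strict hQ b a hb h1))

lemma zQ_step (hQ : ∀ k, 1 ≤ k → ‖Q (k + 1)‖ < ‖Q k‖) {k : ℕ} (hk : 1 ≤ k) :
    ‖Q (k + 1)‖ ≤ (p:ℝ)⁻¹ * ‖Q k‖ := by
  have hk1 : Q k ≠ 0 := zQ_ne hQ hk
  have hk2 : Q (k+1) ≠ 0 := zQ_ne hQ (by omega)
  have hp1 : (1:ℝ) < (p:ℝ) := by exact_mod_cast hp.out.one_lt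
  have hlt0 := hQ k hk
  rw [PadicInt.norm_eq_zpow_neg_valuation hk1, PadicInt.norm_eq_zpow_neg_valuation hk2] at hlt0 ⊢
  set a := ((Q k).valuation : ℤ)
  set b := ((Q (k+1)).valuation : ℤ)
  have hlt : (p:ℝ) ^ (-b) < (p:ℝ) ^ (-a) := hlt0
  have hab : -b < -a := by
    by_contra hcon
    push_neg at hcon
    exact absurd hlt (not_lt.2 (zpow_le_zpow_right₀ (le_of_lt hp1) hcon))
  have : -b ≤ -a - 1 := by omega
  calc (p:ℝ) ^ (-b) ≤ (p:ℝ) ^ (-a - 1) := zpow_le_zpow_right₀ (le_of_lt hp1) this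
    _ = (p:ℝ)⁻¹ * (p:ℝ) ^ (-a) := by
        rw [zpow_sub₀ (by positivity), zpow_one]; ring

lemma zQ_geom (hQ : ∀ k, 1 ≤ k → ‖Q (k + 1)‖ < ‖Q k‖) (m : ℕ) (hm : 1 ≤ m) :
    ∀ k : ℕ, ‖Q (k + m)‖ ≤ ((p:ℝ)⁻¹) ^ k * ‖Q m‖ := by
  intro k
  induction k with
  | zero => simp
  | succ k ih =>
    have h1 : ‖Q (k + m + 1)‖ ≤ (p:ℝ)⁻¹ * ‖Q (k + m)‖ := zQ_step hQ (by omega)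
    have hinv : (0:ℝ) ≤ (p:ℝ)⁻¹ := by positivity
    calc ‖Q (k + 1 + m)‖ = ‖Q (k + m + 1)‖ := by ring_nf
      _ ≤ (p:ℝ)⁻¹ * ‖Q (k + m)‖ := h1
      _ ≤ (p:ℝ)⁻¹ * (((p:ℝ)⁻¹) ^ k * ‖Q m‖) := by
          exact mul_le_mul_of_nonneg_left ih hinv
      _ = ((p:ℝ)⁻¹) ^ (k+1) * ‖Q m‖ := by ring

lemma zTail_summable (hQ : ∀ k, 1 ≤ k → ‖Q (k + 1)‖ < ‖Q k‖) (ε : ℕ → ℕ) (n : ℕ) :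
    Summable (fun k : ℕ => (ε (k + n + 1) : ℤ_[p]) * Q (k + n + 1)) := by
  have hp1 : (1:ℝ) < (p:ℝ) := by exact_mod_cast hp.out.one_lt
  apply Summable.of_norm_bounded (g := fun k => ((p:ℝ)⁻¹) ^ k * ‖Q (n+1)‖)
  · exact (summable_geometric_of_lt_one (by positivity) (by
      rw [inv_lt_one_iff₀]; right; exact hp1)).mul_right _
  · intro k
    calc ‖(ε (k + n + 1) : ℤ_[p]) * Q (k + n + 1)‖
        = ‖(ε (k + n + 1) : ℤ_[p])‖ * ‖Q (k + n + 1)‖ := norm_mul _ _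
      _ ≤ 1 * ‖Q (k + n + 1)‖ := by
          exact mul_le_mul_of_nonneg_right (PadicInt.norm_le_one _) (norm_nonneg _)
      _ = ‖Q (k + (n + 1))‖ := by rw [one_mul]; ring_nf
      _ ≤ ((p:ℝ)⁻¹) ^ k * ‖Q (n+1)‖ := zQ_geom hQ (n+1) (by omega) k

lemma zTail_norm_le (hQ : ∀ k, 1 ≤ k → ‖Q (k + 1)‖ < ‖Q k‖) (ε : ℕ → ℕ) (n : ℕ) :
    ‖zTail ε Q n‖ ≤ ‖Q (n + 1)‖ := by
  apply IsUltrametricDist.norm_tsum_le_of_forall_le_of_nonneg (norm_nonneg _)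
  intro k
  calc ‖(ε (k + n + 1) : ℤ_[p]) * Q (k + n + 1)‖
      = ‖(ε (k + n + 1) : ℤ_[p])‖ * ‖Q (k + n + 1)‖ := norm_mul _ _
    _ ≤ 1 * ‖Q (k + n + 1)‖ :=
        mul_le_mul_of_nonneg_right (PadicInt.norm_le_one _) (norm_nonneg _)
    _ = ‖Q (k + n + 1)‖ := one_mul _
    _ ≤ ‖Q (n + 1)‖ := zQ_anti hQ (n+1) (k+n+1) (by omega) (by omega)

lemma zTail_eq_zero (ε : ℕ → ℕ) (n : ℕ) (hz : ∀ j, n < j → ε j = 0) :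
    zTail ε Q n = 0 := by
  unfold zTail
  convert tsum_zero with k
  rw [hz (k + n + 1) (by omega)]
  simp

lemma zTail_step (hQ : ∀ k, 1 ≤ k → ‖Q (k + 1)‖ < ‖Q k‖) (ε : ℕ → ℕ) {n m : ℕ}
    (hnm : n < m) (hz : ∀ j, n < j → j < m → ε j = 0) :
    zTail ε Q n = (ε m : ℤ_[p]) * Q m + zTail ε Q m := by
  have hsum := zTail_summable hQ ε n
  have key := (Summable.sum_add_tsum_nat_add (f := fun k : ℕ => (ε (k + n + 1) : ℤ_[p]) * Q (k + n + 1))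
    (m - n) hsum).symm
  unfold zTail
  rw [key]
  congr 1
  · rw [Finset.sum_eq_single (m - n - 1)]
    · have hmn : m - n - 1 + n + 1 = m := by omega
      rw [hmn]
    · intro i hi hne
      rw [Finset.mem_range] at hi
      rw [hz (i + n + 1) (by omega) (by omega)]
      simp
    · intro h
      rw [Finset.mem_range] at h
      omega
  · apply tsum_congr
    intro k
    have hmn : k + (m - n) + n + 1 = k + m + 1 := by omega
    rw [hmn]

lemma znorm_coe_nat_eq_one {a : ℕ} (h1 : a ≠ 0) (h2 : a < p) : ‖(a : ℤ_[p])‖ = 1 := by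
  have hle : ‖(a : ℤ_[p])‖ ≤ 1 := PadicInt.norm_le_one _
  rcases lt_or_eq_of_le hle with hlt | heq
  · exfalso
    have : ((a:ℤ) : ℤ_[p]) = (a : ℤ_[p]) := by push_cast; ring
    rw [← this] at hlt
    rw [PadicInt.norm_int_lt_one_iff_dvd] at hlt
    have := Int.le_of_dvd (by exact_mod_cast Nat.pos_of_ne_zero h1) hlt
    omega
  · exact heq

lemma zTail_lead (hQ : ∀ k, 1 ≤ k → ‖Q (k + 1)‖ < ‖Q k‖) (ε : ℕ → ℕ) {n m : ℕ}
    (hm1 : 1 ≤ m) (hnm : n < m) (hz : ∀ j, n < j → j < m → ε j = 0)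
    (hne : ε m ≠ 0) (hlt : ε m < p) :
    ‖zTail ε Q n‖ = ‖Q m‖ := by
  rw [zTail_step hQ ε hnm hz]
  have h1 : ‖(ε m : ℤ_[p]) * Q m‖ = ‖Q m‖ := by
    rw [norm_mul, znorm_coe_nat_eq_one hne hlt, one_mul]
  have h2 : ‖zTail ε Q m‖ ≤ ‖Q (m+1)‖ := zTail_norm_le hQ ε m
  have h3 : ‖Q (m+1)‖ < ‖Q m‖ := hQ m hm1
  have hne2 : ‖(ε m : ℤ_[p]) * Q m‖ ≠ ‖zTail ε Q m‖ := by
    rw [h1]; intro h; rw [← h] at h2; linarith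
  rw [IsUltrametricDist.norm_add_eq_max_of_norm_ne_norm hne2, h1]
  rw [max_eq_left (by linarith)]

lemma zTail_exists_min {ε : ℕ → ℕ} {n : ℕ} (h : zTail ε Q n ≠ 0) :
    ∃ m, n < m ∧ ε m ≠ 0 ∧ ∀ j, n < j → j < m → ε j = 0 := by
  classical
  have hex : ∃ j, n < j ∧ ε j ≠ 0 := by
    by_contra hcon
    push_neg at hcon
    exact h (zTail_eq_zero ε n hcon)
  refine ⟨Nat.find hex, (Nat.find_spec hex).1, (Nat.find_spec hex).2, ?_⟩
  intro j hj1 hj2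
  have hmin := Nat.find_min hex hj2
  push_neg at hmin
  exact hmin hj1

set_option linter.unusedSectionVars false in
lemma zarith1 {a b : ℕ} (ha : 1 ≤ a) (hb : 1 ≤ b)
    (haR : (a:ℝ) ≤ Real.sqrt p) (hbR : (b:ℝ) ≤ Real.sqrt p)
    (hdvd : (p:ℤ) ∣ ((a:ℤ) * (b:ℤ) - 1)) : a = 1 ∧ b = 1 := by
  have habR : ((a * b : ℕ) : ℝ) ≤ (p:ℝ) := by
    push_cast
    calc (a:ℝ) * (b:ℝ) ≤ Real.sqrt p * Real.sqrt p := by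
          apply mul_le_mul haR hbR (by positivity) (Real.sqrt_nonneg _)
      _ = (p:ℝ) := Real.mul_self_sqrt (by positivity)
  have habN : a * b ≤ p := by exact_mod_cast habR
  have h1 : 1 ≤ a * b := Nat.one_le_iff_ne_zero.mpr (by positivity)
  have hab1 : a * b = 1 := by
    by_contra hcon
    have hpos : 0 < (a:ℤ) * (b:ℤ) - 1 := by
      have : 2 ≤ a * b := by omega
      have : (2:ℤ) ≤ (a:ℤ) * (b:ℤ) := by exact_mod_cast this
      omega
    have := Int.le_of_dvd hpos hdvd
    have : (p:ℤ) ≤ (a:ℤ) * (b:ℤ) - 1 := this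
    have hmn : ((a*b : ℕ):ℤ) ≤ (p:ℤ) := by exact_mod_cast habN
    push_cast at hmn
    omega
  exact ⟨by nlinarith [Nat.eq_one_of_mul_eq_one_right hab1], Nat.eq_one_of_mul_eq_one_left hab1⟩

lemma zarith2 {a b : ℕ} (ha : 1 ≤ a) (hb : 1 ≤ b)
    (haR : (a:ℝ) ≤ ((p:ℝ) - 1) / 2) (hbR : (b:ℝ) ≤ ((p:ℝ) - 1) / 2)
    (hdvd : p ∣ (a + b)) : False := by
  have : ((a + b : ℕ) : ℝ) ≤ (p:ℝ) - 1 := by push_cast; linarith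
  have hlt : a + b < p := by
    have : ((a+b:ℕ):ℝ) < (p:ℝ) := by linarith
    exact_mod_cast this
  have hpos : 0 < a + b := by omega
  have := Nat.le_of_dvd hpos hdvd
  omega

lemma zrep {E : Set (ℕ → ℕ)} {W : ℕ → ℤ_[p]}
    (hW : ∀ k, 1 ≤ k → ‖W (k + 1)‖ < ‖W k‖)
    (hlt : ∀ ε ∈ E, ∀ n, 1 ≤ n → ε n < p)
    {x : ℤ_[p]} (hx : x ∈ padicSubset p E W) :
    ∃ ε ∈ E, ∃ m, 1 ≤ m ∧ ε m ≠ 0 ∧ (∀ j, 0 < j → j < m → ε j = 0) ∧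
      x = (ε m : ℤ_[p]) * W m + zTail ε W m ∧ ‖x‖ = ‖W m‖ := by
  obtain ⟨ε, hεE, ⟨k, hk1, hk2⟩, hxeq⟩ := hx
  classical
  have hex : ∃ j, 0 < j ∧ ε j ≠ 0 := ⟨k, hk1, hk2⟩
  have hspec := Nat.find_spec hex
  set m := Nat.find hex with hm
  have hzb : ∀ j, 0 < j → j < m → ε j = 0 := by
    intro j h1 h2
    have h3 := Nat.find_min hex h2
    push_neg at h3
    exact h3 h1
  have hx0 : x = zTail ε W 0 := by
    rw [hxeq]; rfl
  have hmlt := hlt ε hεE m hspec.1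
  refine ⟨ε, hεE, m, hspec.1, hspec.2, hzb, ?_, ?_⟩
  · rw [hx0, zTail_step hW ε hspec.1 hzb]
  · rw [hx0]; exact zTail_lead hW ε hspec.1 hspec.1 hzb hspec.2 hmlt


end Helpers

/-- The weak converse of Zeckendorf's theorem for `p`-adic integers: under the
bound `ε_n ≤ min (√p) ((p-1)/2)` on the values of the completion `𝓔` of a
Zeckendorf collection `𝓔₀`, a decreasing `𝓔`-subset of `ℤ_p` has a unique
decreasing fundamental sequence. -/
theorem padic_weak_converse (p : ℕ) [Fact p.Prime]
    (E0 : Set (ℕ → ℕ)) (hE0 : IsZeckendorf E0)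
    (hbound : ∀ ε ∈ Completion E0, ∀ n, 1 ≤ n →
      (ε n : ℝ) ≤ min (Real.sqrt p) (((p : ℝ) - 1) / 2))
    (Q Z : ℕ → ℤ_[p])
    (hQdec : ∀ k, 1 ≤ k → ‖Q (k + 1)‖ < ‖Q k‖)
    (hZdec : ∀ k, 1 ≤ k → ‖Z (k + 1)‖ < ‖Z k‖)
    (hX : padicSubset p (Completion E0) Q = padicSubset p (Completion E0) Z) :
    ∀ k, 1 ≤ k → Q k = Z k := by
  classical
  obtain ⟨⟨hval, h0E, hbeta⟩, _, _⟩ := hE0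
  -- E0 is contained in its completion
  have hsub : E0 ⊆ Completion E0 := by
    intro μ hμ
    exact ⟨fun _ => μ, fun k => ordA μ + k,
      fun a b h => Nat.add_lt_add_left h (ordA μ),
      fun k => ⟨hμ, Nat.le_add_right _ _, fun j _ => rfl⟩⟩
  -- bounds on coefficients of completion elements
  have hsqrt : ∀ ε ∈ Completion E0, ∀ n, 1 ≤ n → (ε n : ℝ) ≤ Real.sqrt p :=
    fun ε hε n hn => (hbound ε hε n hn).trans (min_le_left _ _)
  have hhalf : ∀ ε ∈ Completion E0, ∀ n, 1 ≤ n → (ε n : ℝ) ≤ ((p:ℝ) - 1) / 2 :=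
    fun ε hε n hn => (hbound ε hε n hn).trans (min_le_right _ _)
  have hp2 : (2:ℝ) ≤ (p:ℝ) := by exact_mod_cast (Fact.out : p.Prime).two_le
  have hfltp : ∀ ε ∈ Completion E0, ∀ n, 1 ≤ n → ε n < p := by
    intro ε hε n hn
    have h1 := hhalf ε hε n hn
    have : (ε n : ℝ) < (p:ℝ) := by linarith
    exact_mod_cast this
  -- membership of the basis values
  have hmem : ∀ (W : ℕ → ℤ_[p]), (∀ k, 1 ≤ k → ‖W (k + 1)‖ < ‖W k‖) →
      ∀ n, 1 ≤ n → W n ∈ padicSubset p (Completion E0) W := by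
    intro W hW n hn
    refine ⟨beta n, hsub (hbeta n hn), ⟨n, hn, by simp [beta]⟩, ?_⟩
    have h1 : zTail (beta n) W 0 = ((beta n n : ℕ) : ℤ_[p]) * W n + zTail (beta n) W n :=
      zTail_step hW (beta n) hn (fun j _ hj2 => by simp [beta]; omega)
    have h2 : zTail (beta n) W n = 0 :=
      zTail_eq_zero (beta n) n (fun j hj => by simp [beta]; omega)
    have h3 : (beta n n : ℕ) = 1 := by simp [beta]
    have : zTail (beta n) W 0 = W n := by
      rw [h1, h2, h3]; push_cast; ring
    rw [← this]; rfl
  -- Step 1: the norms agree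
  have hnormQZ : ∀ n, 1 ≤ n → ‖Q n‖ = ‖Z n‖ := by
    intro n
    induction n using Nat.strong_induction_on with
    | _ n ih =>
      intro hn
      have h1 : Q n ∈ padicSubset p (Completion E0) Z := by
        rw [← hX]; exact hmem Q hQdec n hn
      obtain ⟨ε, hε, m, hm1, -, -, -, hnorm⟩ := zrep hZdec hfltp h1
      have h2 : Z n ∈ padicSubset p (Completion E0) Q := by
        rw [hX]; exact hmem Z hZdec n hn
      obtain ⟨δ, hδ, m', hm'1, -, -, -, hnorm'⟩ := zrep hQdec hfltp h2
      have hge : n ≤ m := by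
        by_contra hcon
        push_neg at hcon
        have heq : ‖Q n‖ = ‖Q m‖ := by rw [hnorm, ← ih m hcon hm1]
        have := zQ_inj hQdec hn hm1 heq
        omega
      have hge' : n ≤ m' := by
        by_contra hcon
        push_neg at hcon
        have heq : ‖Z n‖ = ‖Z m'‖ := by rw [hnorm', ih m' hcon hm'1]
        have := zQ_inj hZdec hn hm'1 heq
        omega
      have e1 : ‖Q n‖ ≤ ‖Z n‖ := by
        rw [hnorm]; exact zQ_anti hZdec n m hn hge
      have e2 : ‖Z n‖ ≤ ‖Q n‖ := by
        rw [hnorm']; exact zQ_anti hQdec n m' hn hge'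
      linarith
  -- Step 2: first-order representations
  have hfirst : ∀ n, 1 ≤ n → ∃ ε ∈ Completion E0, ∃ δ ∈ Completion E0,
      Q n = Z n + zTail ε Z n ∧ Z n = Q n + zTail δ Q n := by
    intro n hn
    have h1 : Q n ∈ padicSubset p (Completion E0) Z := by
      rw [← hX]; exact hmem Q hQdec n hn
    obtain ⟨ε, hε, m, hm1, hεne, -, hrep, hnorm⟩ := zrep hZdec hfltp h1
    have hmn : m = n := by
      apply zQ_inj hZdec hm1 hn
      rw [← hnorm, hnormQZ n hn]
    subst hmn
    have h2 : Z m ∈ padicSubset p (Completion E0) Q := by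
      rw [hX]; exact hmem Z hZdec m hm1
    obtain ⟨δ, hδ, m', hm'1, hδne, -, hrep', hnorm'⟩ := zrep hQdec hfltp h2
    have hmn' : m' = m := by
      apply zQ_inj hQdec hm'1 hm1
      rw [← hnorm', ← hnormQZ m hm1]
    subst hmn'
    -- show ε m' = 1 and δ m' = 1
    set a := ε m' with ha
    set b := δ m' with hb
    set T := zTail ε Z m' with hT
    set U := zTail δ Q m' with hU
    have key : (((a:ℤ) * (b:ℤ) - 1 : ℤ) : ℤ_[p]) * Q m' = -((a:ℤ_[p]) * U + T) := by
      push_cast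
      linear_combination -hrep - (a : ℤ_[p]) * hrep'
    have hQne : Q m' ≠ 0 := zQ_ne hQdec hm'1
    have hQpos : (0:ℝ) < ‖Q m'‖ := by
      simpa [norm_pos_iff] using hQne
    have hZnorm : ‖Z (m' + 1)‖ < ‖Q m'‖ := by
      rw [hnormQZ m' hm'1]; exact hZdec m' hm'1
    have hRHS : ‖-((a:ℤ_[p]) * U + T)‖ < ‖Q m'‖ := by
      rw [norm_neg]
      apply lt_of_le_of_lt (PadicInt.nonarchimedean _ _)
      apply max_lt
      · calc ‖(a:ℤ_[p]) * U‖ = ‖(a:ℤ_[p])‖ * ‖U‖ := norm_mul _ _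
          _ ≤ 1 * ‖U‖ := mul_le_mul_of_nonneg_right (PadicInt.norm_le_one _) (norm_nonneg _)
          _ = ‖U‖ := one_mul _
          _ ≤ ‖Q (m' + 1)‖ := zTail_norm_le hQdec δ m'
          _ < ‖Q m'‖ := hQdec m' hm'1
      · calc ‖T‖ ≤ ‖Z (m' + 1)‖ := zTail_norm_le hZdec ε m'
          _ < ‖Q m'‖ := hZnorm
    have hsmall : ‖(((a:ℤ) * (b:ℤ) - 1 : ℤ) : ℤ_[p])‖ < 1 := by
      by_contra hcon
      push_neg at hcon
      have h5 : ‖(((a:ℤ) * (b:ℤ) - 1 : ℤ) : ℤ_[p]) * Q m'‖ = 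
          ‖(((a:ℤ) * (b:ℤ) - 1 : ℤ) : ℤ_[p])‖ * ‖Q m'‖ := norm_mul _ _
      rw [key] at h5
      nlinarith [hRHS, hQpos]
    rw [PadicInt.norm_int_lt_one_iff_dvd] at hsmall
    have hab := zarith1 (Nat.one_le_iff_ne_zero.mpr hεne) (Nat.one_le_iff_ne_zero.mpr hδne)
      (hsqrt ε hε m' hm'1) (hsqrt δ hδ m' hm'1) hsmall
    refine ⟨ε, hε, δ, hδ, ?_, ?_⟩
    · rw [hrep, hab.1]; push_cast; ring
    · rw [hrep', hab.2]; push_cast; ring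
  -- Step 3: conclude equality
  intro n hn
  by_contra hne
  obtain ⟨ε, hε, δ, hδ, hQn, hZn⟩ := hfirst n hn
  have hT : Q n - Z n = zTail ε Z n := by rw [hQn]; ring
  have hU : Z n - Q n = zTail δ Q n := by rw [hZn]; ring
  have hTne : zTail ε Z n ≠ 0 := by
    rw [← hT]; intro h; exact hne (sub_eq_zero.mp h)
  have hUne : zTail δ Q n ≠ 0 := by
    rw [← hU]; intro h; exact hne (sub_eq_zero.mp h).symm
  obtain ⟨m, hnm, hεm, hεz⟩ := zTail_exists_min hTne
  obtain ⟨m', hnm', hδm', hδz⟩ := zTail_exists_min hUne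
  have hm1 : 1 ≤ m := by omega
  have hm'1 : 1 ≤ m' := by omega
  have hTnorm : ‖zTail ε Z n‖ = ‖Z m‖ :=
    zTail_lead hZdec ε hm1 hnm hεz hεm (hfltp ε hε m hm1)
  have hUnorm : ‖zTail δ Q n‖ = ‖Q m'‖ :=
    zTail_lead hQdec δ hm'1 hnm' hδz hδm' (hfltp δ hδ m' hm'1)
  have hTU : zTail ε Z n = -(zTail δ Q n) := by rw [← hT, ← hU]; ring
  have hmm : m = m' := by
    apply zQ_inj hZdec hm1 hm'1
    rw [← hTnorm, hTU, norm_neg, hUnorm, hnormQZ m' hm'1]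
  subst hmm
  -- decompose further
  have t1 : zTail ε Z n = (ε m : ℤ_[p]) * Z m + zTail ε Z m := zTail_step hZdec ε hnm hεz
  have t2 : zTail δ Q n = (δ m : ℤ_[p]) * Q m + zTail δ Q m := zTail_step hQdec δ hnm' hδz
  obtain ⟨ε', hε', δ', hδ', hQm, -⟩ := hfirst m hm1
  set D := zTail ε' Z m with hD
  have hDnorm : ‖D‖ ≤ ‖Z (m + 1)‖ := zTail_norm_le hZdec ε' m
  have key : (((ε m + δ m : ℕ)) : ℤ_[p]) * Z m
      = -(zTail ε Z m + zTail δ Q m + (δ m : ℤ_[p]) * D) := by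
    push_cast
    linear_combination -t1 + hTU - t2 - (δ m : ℤ_[p]) * hQm
  have hZne : Z m ≠ 0 := zQ_ne hZdec hm1
  have hZpos : (0:ℝ) < ‖Z m‖ := by simpa [norm_pos_iff] using hZne
  have hQZ1 : ‖Q (m+1)‖ = ‖Z (m+1)‖ := hnormQZ (m+1) (by omega)
  have hRHS : ‖-(zTail ε Z m + zTail δ Q m + (δ m : ℤ_[p]) * D)‖ < ‖Z m‖ := by
    rw [norm_neg]
    apply lt_of_le_of_lt (PadicInt.nonarchimedean _ _)
    apply max_lt
    · apply lt_of_le_of_lt (PadicInt.nonarchimedean _ _)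
      apply max_lt
      · exact lt_of_le_of_lt (zTail_norm_le hZdec ε m) (hZdec m hm1)
      · apply lt_of_le_of_lt (zTail_norm_le hQdec δ m)
        rw [hQZ1]; exact hZdec m hm1
    · calc ‖(δ m : ℤ_[p]) * D‖ = ‖(δ m : ℤ_[p])‖ * ‖D‖ := norm_mul _ _
        _ ≤ 1 * ‖D‖ := mul_le_mul_of_nonneg_right (PadicInt.norm_le_one _) (norm_nonneg _)
        _ = ‖D‖ := one_mul _
        _ ≤ ‖Z (m+1)‖ := hDnorm
        _ < ‖Z m‖ := hZdec m hm1
  have hsmall : ‖(((ε m + δ m : ℕ)) : ℤ_[p])‖ < 1 := by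
    by_contra hcon
    push_neg at hcon
    have h5 : ‖(((ε m + δ m : ℕ)) : ℤ_[p]) * Z m‖ =
        ‖(((ε m + δ m : ℕ)) : ℤ_[p])‖ * ‖Z m‖ := norm_mul _ _
    rw [key] at h5
    nlinarith [hRHS, hZpos]
  have hcast : ((((ε m + δ m : ℕ)) : ℤ) : ℤ_[p]) = (((ε m + δ m : ℕ)) : ℤ_[p]) := by push_cast; ring
  rw [← hcast, PadicInt.norm_int_lt_one_iff_dvd] at hsmall
  have hdvd : p ∣ (ε m + δ m) := by exact_mod_cast hsmall
  exact zarith2 (Nat.one_le_iff_ne_zero.mpr hεm) (Nat.one_le_iff_ne_zero.mpr hδm')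
    (hhalf ε hε m hm1) (hhalf δ hδ m hm1) hdvd
end

section
/- Let p be a prime and let 𝓔 be any set of functions ε : {1,2,…} → ℕ with ε_k < p for all k, containing the zero function and every basis function β^i. Let Q and Z be sequences in ℤ_p with |Q_k|_p > |Q_{k+1}|_p and |Z_k|_p > |Z_{k+1}|_p for all k ≥ 1, and suppose X_Q = X_Z. Then v_p(Q_k) = v_p(Z_k) for all k ≥ 1. -/
section Aux
variable {p : ℕ} [Fact p.Prime]

lemma padic_ne_zero_of_dec {Z : ℕ → ℤ_[p]}
    (hdec : ∀ k, 1 ≤ k → ‖Z (k + 1)‖ < ‖Z k‖) : ∀ k, 1 ≤ k → Z k ≠ 0 := by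
  intro k hk h
  have h1 := hdec k hk
  have h2 : (0 : ℝ) ≤ ‖Z (k + 1)‖ := norm_nonneg _
  rw [h, norm_zero] at h1
  linarith

lemma padic_norm_anti {Z : ℕ → ℤ_[p]}
    (hdec : ∀ k, 1 ≤ k → ‖Z (k + 1)‖ < ‖Z k‖) :
    ∀ a b, 1 ≤ a → a ≤ b → ‖Z b‖ ≤ ‖Z a‖ := by
  intro a b ha hab
  induction b, hab using Nat.le_induction with
  | base => exact le_rfl
  | succ n hn ih => exact le_trans (hdec n (ha.trans hn)).le ih

lemma padic_norm_strict_anti {Z : ℕ → ℤ_[p]}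
    (hdec : ∀ k, 1 ≤ k → ‖Z (k + 1)‖ < ‖Z k‖) :
    ∀ a b, 1 ≤ a → a < b → ‖Z b‖ < ‖Z a‖ := by
  intro a b ha hab
  exact lt_of_le_of_lt (padic_norm_anti hdec (a + 1) b (by omega) hab) (hdec a ha)

lemma padic_val_step {Z : ℕ → ℤ_[p]}
    (hdec : ∀ k, 1 ≤ k → ‖Z (k + 1)‖ < ‖Z k‖) :
    ∀ k, 1 ≤ k → (Z k).valuation + 1 ≤ (Z (k + 1)).valuation := by
  intro k hk
  have h1 := hdec k hk
  have hZk := padic_ne_zero_of_dec hdec k hk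
  have hZk1 := padic_ne_zero_of_dec hdec (k + 1) (by omega)
  rw [PadicInt.norm_eq_zpow_neg_valuation hZk, PadicInt.norm_eq_zpow_neg_valuation hZk1] at h1
  have hp1 : (1 : ℝ) < (p : ℝ) := by
    exact_mod_cast (Fact.out : p.Prime).one_lt
  have := (zpow_right_strictMono₀ hp1).lt_iff_lt.mp h1
  omega

lemma padic_norm_le_geom {Z : ℕ → ℤ_[p]}
    (hdec : ∀ k, 1 ≤ k → ‖Z (k + 1)‖ < ‖Z k‖) :
    ∀ k : ℕ, ‖Z (k + 1)‖ ≤ ‖Z 1‖ * ((p : ℝ)⁻¹) ^ k := by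
  have hp1 : (1 : ℝ) < (p : ℝ) := by exact_mod_cast (Fact.out : p.Prime).one_lt
  have hp0 : (0 : ℝ) < (p : ℝ) := lt_trans one_pos hp1
  have hval : ∀ k : ℕ, (Z 1).valuation + k ≤ (Z (k + 1)).valuation := by
    intro k
    induction k with
    | zero => simp
    | succ n ih =>
      have := padic_val_step hdec (n + 1) (by omega)
      push_cast
      push_cast at ih
      omega
  intro k
  have hne := padic_ne_zero_of_dec hdec (k + 1) (by omega)
  have hne1 := padic_ne_zero_of_dec hdec 1 le_rfl
  rw [PadicInt.norm_eq_zpow_neg_valuation hne, PadicInt.norm_eq_zpow_neg_valuation hne1]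
  have : (p : ℝ) ^ (-((Z (k + 1)).valuation : ℤ)) ≤ (p : ℝ) ^ (-(((Z 1).valuation : ℤ) + k)) := by
    apply (zpow_right_strictMono₀ hp1).monotone
    have := hval k
    omega
  refine this.trans (le_of_eq ?_)
  rw [neg_add, zpow_add₀ (ne_of_gt hp0)]
  congr 1
  rw [zpow_neg, ← zpow_natCast, inv_zpow]

lemma padic_summable {Z : ℕ → ℤ_[p]}
    (hdec : ∀ k, 1 ≤ k → ‖Z (k + 1)‖ < ‖Z k‖) (ε : ℕ → ℕ) :
    Summable (fun k : ℕ => (ε (k + 1) : ℤ_[p]) * Z (k + 1)) := by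
  apply NonarchimedeanAddGroup.summable_of_tendsto_cofinite_zero
  rw [Nat.cofinite_eq_atTop]
  rw [tendsto_zero_iff_norm_tendsto_zero]
  have hp1 : (1 : ℝ) < (p : ℝ) := by exact_mod_cast (Fact.out : p.Prime).one_lt
  have hbound : ∀ k : ℕ, ‖(ε (k + 1) : ℤ_[p]) * Z (k + 1)‖ ≤ ‖Z 1‖ * ((p : ℝ)⁻¹) ^ k := by
    intro k
    calc ‖(ε (k + 1) : ℤ_[p]) * Z (k + 1)‖ ≤ ‖(ε (k + 1) : ℤ_[p])‖ * ‖Z (k + 1)‖ :=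
          norm_mul_le _ _
      _ ≤ 1 * ‖Z (k + 1)‖ := by
          apply mul_le_mul_of_nonneg_right (PadicInt.norm_le_one _) (norm_nonneg _)
      _ = ‖Z (k + 1)‖ := one_mul _
      _ ≤ ‖Z 1‖ * ((p : ℝ)⁻¹) ^ k := padic_norm_le_geom hdec k
  apply squeeze_zero (fun k => norm_nonneg _) hbound
  have : Filter.Tendsto (fun k : ℕ => ((p : ℝ)⁻¹) ^ k) Filter.atTop (nhds 0) := by
    apply tendsto_pow_atTop_nhds_zero_of_lt_one
    · positivity
    · rw [inv_lt_one_iff₀]; right; exact hp1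
  simpa using this.const_mul ‖Z 1‖

lemma padic_norm_tsum_le (f : ℕ → ℤ_[p]) {C : ℝ} (hC : 0 ≤ C)
    (h : ∀ n, ‖f n‖ ≤ C) : ‖∑' n, f n‖ ≤ C := by
  by_cases hf : Summable f
  · refine le_of_tendsto' hf.hasSum.tendsto_sum_nat.norm (fun n => ?_)
    exact IsUltrametricDist.norm_sum_le_of_forall_le_of_nonneg hC (fun i _ => h i)
  · rw [tsum_eq_zero_of_not_summable hf, norm_zero]; exact hC

lemma padic_coeff_norm_one {n : ℕ} (hn : n ≠ 0) (hnp : n < p) :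
    ‖((n : ℕ) : ℤ_[p])‖ = 1 := by
  refine le_antisymm (PadicInt.norm_le_one _) (not_lt.mp ?_)
  intro hlt
  have hcast : ((n : ℤ) : ℤ_[p]) = ((n : ℕ) : ℤ_[p]) := by push_cast; ring
  rw [← hcast] at hlt
  have hdvd : (p : ℤ) ∣ (n : ℤ) := (PadicInt.norm_int_lt_one_iff_dvd _).mp hlt
  have hdvd' : p ∣ n := by exact_mod_cast hdvd
  have := Nat.le_of_dvd (Nat.pos_of_ne_zero hn) hdvd'
  omega

/-- The exact norm of an element of the generated set. -/
lemma padic_tsum_norm_eq {Z : ℕ → ℤ_[p]}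
    (hdec : ∀ k, 1 ≤ k → ‖Z (k + 1)‖ < ‖Z k‖) (ε : ℕ → ℕ)
    (hlt : ∀ k, 1 ≤ k → ε k < p) {j : ℕ} (hj : 1 ≤ j) (hεj : ε j ≠ 0)
    (hmin : ∀ i, 1 ≤ i → i < j → ε i = 0) :
    ‖∑' k : ℕ, (ε (k + 1) : ℤ_[p]) * Z (k + 1)‖ = ‖Z j‖ := by
  obtain ⟨m, rfl⟩ : ∃ m, j = m + 1 := ⟨j - 1, by omega⟩
  have hsum : Summable (fun k : ℕ => (ε (k + 1) : ℤ_[p]) * Z (k + 1)) :=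
    padic_summable hdec ε
  have hhead : ∑ i ∈ Finset.range (m + 1), (ε (i + 1) : ℤ_[p]) * Z (i + 1)
      = (ε (m + 1) : ℤ_[p]) * Z (m + 1) := by
    apply Finset.sum_eq_single m
    · intro i hi hne
      have hi' : i + 1 < m + 1 := by
        simp only [Finset.mem_range] at hi; omega
      have h0 : ε (i + 1) = 0 := hmin (i + 1) (by omega) hi'
      simp [h0]
    · intro h; exact absurd (Finset.self_mem_range_succ m) h
  have hfm : ‖(ε (m + 1) : ℤ_[p]) * Z (m + 1)‖ = ‖Z (m + 1)‖ := by
    have h1 : ‖((ε (m + 1) : ℕ) : ℤ_[p])‖ = 1 :=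
      padic_coeff_norm_one hεj (hlt (m + 1) (by omega))
    rw [norm_mul, h1, one_mul]
  have hb : ∀ n : ℕ, ‖(ε (n + (m + 1) + 1) : ℤ_[p]) * Z (n + (m + 1) + 1)‖ ≤ ‖Z (m + 2)‖ := by
    intro n
    calc ‖(ε (n + (m + 1) + 1) : ℤ_[p]) * Z (n + (m + 1) + 1)‖
        = ‖((ε (n + (m + 1) + 1) : ℕ) : ℤ_[p])‖ * ‖Z (n + (m + 1) + 1)‖ := norm_mul _ _
      _ ≤ 1 * ‖Z (n + (m + 1) + 1)‖ :=
          mul_le_mul_of_nonneg_right (PadicInt.norm_le_one _) (norm_nonneg _)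
      _ = ‖Z (n + m + 2)‖ := by rw [one_mul]; congr 2
      _ ≤ ‖Z (m + 2)‖ := padic_norm_anti hdec (m + 2) (n + m + 2) (by omega) (by omega)
  have hsplit := Summable.sum_add_tsum_nat_add
    (f := fun k : ℕ => (ε (k + 1) : ℤ_[p]) * Z (k + 1)) (m + 1) hsum
  rw [← hsplit, hhead]
  set T : ℤ_[p] := ∑' i : ℕ, (ε (i + (m + 1) + 1) : ℤ_[p]) * Z (i + (m + 1) + 1) with hT
  have htail : ‖T‖ ≤ ‖Z (m + 2)‖ := padic_norm_tsum_le _ (norm_nonneg _) hb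
  have hlt2 : ‖T‖ < ‖(ε (m + 1) : ℤ_[p]) * Z (m + 1)‖ := by
    rw [hfm]; exact lt_of_le_of_lt htail (hdec (m + 1) (by omega))
  rw [IsUltrametricDist.norm_add_eq_max_of_norm_ne_norm hlt2.ne',
    max_eq_left hlt2.le, hfm]

/-- Every element of the generated set has norm equal to some `‖Z i‖`. -/
lemma padic_mem_norm {E : Set (ℕ → ℕ)} (hlt : ∀ ε ∈ E, ∀ k, 1 ≤ k → ε k < p)
    {Z : ℕ → ℤ_[p]} (hdec : ∀ k, 1 ≤ k → ‖Z (k + 1)‖ < ‖Z k‖)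
    {x : ℤ_[p]} (hx : x ∈ padicSubset p E Z) : ∃ i, 1 ≤ i ∧ ‖x‖ = ‖Z i‖ := by
  obtain ⟨ε, hε, ⟨k0, hk0, hk0ne⟩, rfl⟩ := hx
  have hex : ∃ i, 1 ≤ i ∧ ε i ≠ 0 := ⟨k0, hk0, hk0ne⟩
  classical
  let j := Nat.find hex
  have hjspec := Nat.find_spec hex
  refine ⟨j, hjspec.1, ?_⟩
  apply padic_tsum_norm_eq hdec ε (hlt ε hε) hjspec.1 hjspec.2
  intro i hi hij
  have hmin := Nat.find_min hex hij
  push_neg at hmin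
  by_contra hne
  exact hne (by simpa using hmin hi)

/-- Each `Q j` lies in the generated set. -/
lemma padic_self_mem {E : Set (ℕ → ℕ)} (hbeta : ∀ i, 1 ≤ i → beta i ∈ E)
    (Q : ℕ → ℤ_[p]) {j : ℕ} (hj : 1 ≤ j) : Q j ∈ padicSubset p E Q := by
  obtain ⟨m, rfl⟩ : ∃ m, j = m + 1 := ⟨j - 1, by omega⟩
  refine ⟨beta (m + 1), hbeta (m + 1) (by omega), ⟨m + 1, by omega, by simp [beta]⟩, ?_⟩
  rw [tsum_eq_single m]
  · simp [beta]
  · intro k hk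
    have h0 : beta (m + 1) (k + 1) = 0 := by simp [beta]; omega
    simp [h0]

end Aux

/-- If two decreasing sequences in `ℤ_p` generate the same `𝓔`-subset, for a
collection `𝓔` of coefficient functions with values `< p` containing the zero
function and all basis functions, then the `p`-adic valuations of their terms
agree. -/
theorem padic_equal_valuations (p : ℕ) [Fact p.Prime] (E : Set (ℕ → ℕ))
    (hlt : ∀ ε ∈ E, ∀ k, 1 ≤ k → ε k < p)
    (hzero : (0 : ℕ → ℕ) ∈ E) (hbeta : ∀ i, 1 ≤ i → beta i ∈ E)
    (Q Z : ℕ → ℤ_[p])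
    (hQdec : ∀ k, 1 ≤ k → ‖Q (k + 1)‖ < ‖Q k‖)
    (hZdec : ∀ k, 1 ≤ k → ‖Z (k + 1)‖ < ‖Z k‖)
    (hX : padicSubset p E Q = padicSubset p E Z) :
    ∀ k, 1 ≤ k → (Q k).valuation = (Z k).valuation := by
  have hQZ : ∀ j, 1 ≤ j → ∃ i, 1 ≤ i ∧ ‖Q j‖ = ‖Z i‖ := by
    intro j hj
    exact padic_mem_norm hlt hZdec (hX ▸ padic_self_mem hbeta Q hj)
  have hZQ : ∀ j, 1 ≤ j → ∃ i, 1 ≤ i ∧ ‖Z j‖ = ‖Q i‖ := by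
    intro j hj
    exact padic_mem_norm hlt hQdec (hX ▸ padic_self_mem hbeta Z hj)
  have key : ∀ k, 1 ≤ k → ‖Q k‖ = ‖Z k‖ := by
    intro k
    induction k using Nat.strong_induction_on with
    | _ k ih =>
      intro hk
      obtain ⟨i, hi, hQi⟩ := hQZ k hk
      obtain ⟨i', hi', hZi⟩ := hZQ k hk
      have h1 : ‖Q k‖ ≤ ‖Z k‖ := by
        rcases lt_or_ge i k with hik | hik
        · exfalso
          have hQZi := ih i hik hi
          have hlt2 := padic_norm_strict_anti hQdec i k hi hik
          rw [hQZi, ← hQi] at hlt2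
          exact lt_irrefl _ hlt2
        · rcases eq_or_lt_of_le hik with rfl | hik'
          · exact le_of_eq hQi
          · exact hQi.le.trans (padic_norm_strict_anti hZdec k i hk hik').le
      have h2 : ‖Z k‖ ≤ ‖Q k‖ := by
        rcases lt_or_ge i' k with hik | hik
        · exfalso
          have hQZi := ih i' hik hi'
          have hlt2 := padic_norm_strict_anti hZdec i' k hi' hik
          rw [← hQZi, ← hZi] at hlt2
          exact lt_irrefl _ hlt2
        · rcases eq_or_lt_of_le hik with rfl | hik'
          · exact le_of_eq hZi
          · exact hZi.le.trans (padic_norm_strict_anti hQdec k i' hk hik').le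
      exact le_antisymm h1 h2
  intro k hk
  have hQne := padic_ne_zero_of_dec hQdec k hk
  have hZne := padic_ne_zero_of_dec hZdec k hk
  have h := key k hk
  rw [PadicInt.norm_eq_zpow_neg_valuation hQne, PadicInt.norm_eq_zpow_neg_valuation hZne] at h
  have hp1 : (1 : ℝ) < (p : ℝ) := by exact_mod_cast (Fact.out : p.Prime).one_lt
  have := (zpow_right_strictMono₀ hp1).injective h
  omega
end
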